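/- arXiv:1811.10918 — 9 statements merged into one kernel-verified Lean document; each statement's English description precedes it below -/
import Mathlib

section
/- Let v = 1u0 be a type α Dyck word and let w be any Dyck word of the same length as v. Then v and w are non-overlapping strings: no nonempty proper prefix of one equals a nonempty proper suffix of the other. -/
/-- number of 1's in a binary word (1 = `true`) -/
def ones (w : List Bool) : ℕ := w.count true

/-- number of 0's in a binary word (0 = `false`) -/
def zeros (w : List Bool) : ℕ := w.count false

/-- Dyck word: equally many 1's and 0's, every prefix has at least as many 1's as 0's. -/
def IsDyck (w : List Bool) : Prop :=
  ones w = zeros w ∧ ∀ γ : List Bool, γ <+: w → zeros γ ≤ ones γ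

/-- type α Dyck word: a Dyck word all of whose nonempty proper prefixes have
strictly more 1's than 0's. -/
def IsAlphaDyck (v : List Bool) : Prop :=
  IsDyck v ∧ ∀ γ : List Bool, γ <+: v → γ ≠ [] → γ ≠ v → zeros γ < ones γ

/-- two strings are non-overlapping: no nonempty proper prefix of either equals a
nonempty proper suffix of the other. -/
def NonOverlapping (x y : List Bool) : Prop :=
  ∀ s : List Bool, s ≠ [] →
    ¬(s <+: x ∧ s ≠ x ∧ s <:+ y ∧ s ≠ y) ∧
    ¬(s <+: y ∧ s ≠ y ∧ s <:+ x ∧ s ≠ x)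

/-- a type α Dyck word and any Dyck word of the same length are non-overlapping. -/
theorem alpha_dyck_nonoverlapping (v w : List Bool) (hv : IsAlphaDyck v) (hw : IsDyck w)
    (hlen : w.length = v.length) : NonOverlapping v w := by
  intro s hs
  constructor
  · rintro ⟨hpv, hnev, ⟨γ, rfl⟩, hnew⟩
    have h1 : zeros s < ones s := hv.2 s hpv hs hnev
    have h2 : zeros γ ≤ ones γ := hw.2 γ ⟨s, rfl⟩
    have h3 : ones (γ ++ s) = zeros (γ ++ s) := hw.1
    simp only [ones, zeros, List.count_append] at h1 h2 h3
    omega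
  · rintro ⟨hpw, hnew, ⟨γ, rfl⟩, hnev⟩
    have h2 : zeros s ≤ ones s := hw.2 s hpw
    have hγne : γ ≠ [] := by rintro rfl; simp at hnev
    have hγnv : γ ≠ γ ++ s := by
      intro h
      have := congrArg List.length h
      simp at this
      exact hs this
    have h1 : zeros γ < ones γ := hv.2 γ ⟨s, rfl⟩ hγne hγnv
    have h3 : ones (γ ++ s) = zeros (γ ++ s) := hv.1.1
    simp only [ones, zeros, List.count_append] at h1 h2 h3
    omega
end

section
/- Let v = 1u0 be a type α Dyck word of length n (so u is a Dyck word of length n−2), and let B = 11w where w is a Dyck word of length n−2 with w ≠ u. Then v and B are non-overlapping strings. -/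
/-- Trichotomy for prefixes of `11w`. -/
lemma prefB_aux (w p : List Bool) (hw : IsDyck w) (hp : p <+: true :: true :: w) :
    p = [] ∨ p = [true] ∨ zeros p + 2 ≤ ones p := by
  obtain ⟨t, ht⟩ := hp
  match p with
  | [] => exact Or.inl rfl
  | [a] =>
    simp only [List.cons_append, List.nil_append, List.cons.injEq] at ht
    exact Or.inr (Or.inl (by simp [ht.1]))
  | a :: b :: q =>
    simp only [List.cons_append, List.cons.injEq] at ht
    obtain ⟨ha, hb, hq⟩ := ht
    have hqw : q <+: w := ⟨t, hq⟩
    have := hw.2 q hqw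
    refine Or.inr (Or.inr ?_)
    subst ha hb
    simp [ones, zeros, List.count_cons] at this ⊢
    omega

/-- v = 1u0 type α of length n and B = 11w with w Dyck of length n−2, w ≠ u,
are non-overlapping. -/
theorem alpha_type2_nonoverlapping (n : ℕ) (u v w B : List Bool)
    (hv : v = true :: (u ++ [false])) (hα : IsAlphaDyck v) (hvlen : v.length = n)
    (hu : IsDyck u) (hul : u.length = n - 2)
    (hw : IsDyck w) (hwl : w.length = n - 2) (hwu : w ≠ u)
    (hB : B = true :: true :: w) : NonOverlapping v B := by
  subst hv hB
  intro s hs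
  constructor
  · rintro ⟨hsp, hsv, hss, hsB⟩
    have hαs : zeros s < ones s := hα.2 s hsp hs hsv
    obtain ⟨p, hp⟩ := hss
    have hpB : p <+: true :: true :: w := ⟨s, hp⟩
    have hpne : p ≠ [] := by
      rintro rfl
      exact hsB hp
    rcases prefB_aux w p hw hpB with h | h | h
    · exact hpne h
    · -- p = [true], so s = true :: w
      subst h
      simp only [List.cons_append, List.nil_append, List.cons.injEq, true_and] at hp
      subst hp
      obtain ⟨t, ht⟩ := hsp
      simp only [List.cons_append, List.cons.injEq, true_and] at ht
      have hlu : u.length + 2 = n := by simpa using hvlen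
      have hlw : w.length = u.length := by omega
      have := List.append_inj_left ht hlw
      exact hwu this
    · -- count contradiction
      have h1 := congrArg (List.count true) hp
      have h2 := congrArg (List.count false) hp
      simp [List.count_append, List.count_cons] at h1 h2
      have hwd := hw.1
      simp only [ones, zeros] at *
      omega
  · rintro ⟨hsp, hsB, hss, hsv⟩
    obtain ⟨p, hp⟩ := hss
    have hpv : p <+: true :: (u ++ [false]) := ⟨s, hp⟩
    have hple := hα.1.2 p hpv
    have hveq := hα.1.1
    have h1 := congrArg (List.count true) hp
    have h2 := congrArg (List.count false) hp
    simp [List.count_append, List.count_cons] at h1 h2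
    have hne : zeros s < ones s := by
      rcases prefB_aux w s hw hsp with h | h | h
      · exact absurd h hs
      · subst h; simp [ones, zeros]
      · omega
    simp [ones, zeros, List.count_cons] at *
    omega
end

section
/- Let v = 1u0 be a type α Dyck word of length n (so u is a Dyck word of length n−2), and let B = w00 where w is a Dyck word of length n−2 with w ≠ u. Then v and B are non-overlapping strings. -/
lemma dyck_suffix {w t : List Bool} (hw : IsDyck w) (ht : t <:+ w) : ones t ≤ zeros t := by
  obtain ⟨p, rfl⟩ := ht
  have hp := hw.2 p (List.prefix_append _ _)
  have h := hw.1
  simp [ones, zeros, List.count_append] at h hp ⊢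
  omega

lemma suffix_concat {s l : List Bool} {x : Bool} (h : s <:+ l ++ [x]) (hne : s ≠ []) :
    ∃ t, t <:+ l ∧ s = t ++ [x] := by
  have hne' : s.reverse ≠ [] := by simpa using hne
  obtain ⟨a, r, hr⟩ := List.exists_cons_of_ne_nil hne'
  have h' : a :: r <+: x :: l.reverse := by
    rw [← hr]
    rw [← List.reverse_prefix] at h
    simpa using h
  rw [List.cons_prefix_cons] at h'
  refine ⟨r.reverse, ?_, ?_⟩
  · rw [← List.reverse_prefix]; simpa using h'.2
  · have := congrArg List.reverse hr
    simpa [h'.1] using this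

/-- v = 1u0 type α of length n and B = w00 with w Dyck of length n−2, w ≠ u,
are non-overlapping. -/
theorem alpha_type3_nonoverlapping (n : ℕ) (u v w B : List Bool)
    (hv : v = true :: (u ++ [false])) (hα : IsAlphaDyck v) (hvlen : v.length = n)
    (hu : IsDyck u) (hul : u.length = n - 2)
    (hw : IsDyck w) (hwl : w.length = n - 2) (hwu : w ≠ u)
    (hB : B = w ++ [false, false]) : NonOverlapping v B := by
  intro s hs
  constructor
  · rintro ⟨hsv, hsnv, hsB, -⟩
    have hlt : zeros s < ones s := hα.2 s hsv hs hsnv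
    have hsB' : s <:+ (w ++ [false]) ++ [false] := by
      simpa [hB, List.append_assoc] using hsB
    obtain ⟨t, ht, rfl⟩ := suffix_concat hsB' hs
    have hto : ones t ≤ zeros t := by
      rcases eq_or_ne t [] with rfl | htne
      · simp [ones, zeros]
      · obtain ⟨t', ht', rfl⟩ := suffix_concat ht htne
        have := dyck_suffix hw ht'
        simp [ones, zeros, List.count_append] at this ⊢
        omega
    simp [ones, zeros, List.count_append] at hlt hto
    omega
  · rintro ⟨hsB, hsnB, hsv, hsnv⟩
    have hsv' : s <:+ (true :: u) ++ [false] := by simpa [hv] using hsv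
    obtain ⟨t, ht, rfl⟩ := suffix_concat hsv' hs
    rcases (List.suffix_cons_iff.mp ht) with rfl | htu
    · exact hsnv (by simp [hv])
    have hto : ones t ≤ zeros t := dyck_suffix hu htu
    subst hB
    have hlt2 : t.length ≤ w.length + 1 := by
      have := List.IsPrefix.length_le hsB; simp at this; omega
    rcases lt_or_ge t.length w.length with hl | hl
    · have hsw : t ++ [false] <+: w :=
        List.prefix_of_prefix_length_le hsB (List.prefix_append _ _) (by simp; omega)
      have := hw.2 _ hsw
      simp [ones, zeros, List.count_append] at this hto
      omega
    rcases lt_or_ge t.length (w.length + 1) with hl2 | hl2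
    · have hpw : t ++ [false] <+: w ++ [false] := by
        have hw1 : w ++ [false] <+: w ++ [false, false] := ⟨[false], by simp⟩
        exact List.prefix_of_prefix_length_le hsB hw1 (by simp; omega)
      have heq : t ++ [false] = w ++ [false] := hpw.eq_of_length (by simp; omega)
      have htw : t = w := by simpa using heq
      have hlu : t.length = u.length := by
        have := congrArg List.length htw; omega
      have : t = u := List.IsSuffix.eq_of_length htu hlu
      exact hwu (htw ▸ this ▸ rfl)
    · have : t ++ [false] = w ++ [false, false] :=
        hsB.eq_of_length (by simp; omega)
      exact hsnB this
end

section
/- Let v = 1u0 be a type α Dyck word of length n (so u is a Dyck word of length n−2), and let B = 01w where w is a Dyck word of length n−2 with w ≠ u. Then no nonempty proper prefix of v equals a nonempty proper suffix of B, and no nonempty proper prefix of B of length greater than 1 equals a nonempty proper suffix of v. -/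
lemma ones_append (a b : List Bool) : ones (a ++ b) = ones a + ones b := by
  simp [ones, List.count_append]

lemma zeros_append (a b : List Bool) : zeros (a ++ b) = zeros a + zeros b := by
  simp [zeros, List.count_append]

/-- for v = 1u0 type α of length n and B = 01w with w Dyck of length n−2, w ≠ u:
no nonempty proper prefix of v is a nonempty proper suffix of B, and no nonempty proper prefix
of B of length > 1 is a nonempty proper suffix of v. -/
theorem alpha_type4_overlap_restrictions (n : ℕ) (u v w B : List Bool)
    (hv : v = true :: (u ++ [false])) (hα : IsAlphaDyck v) (hvlen : v.length = n)
    (hu : IsDyck u) (hul : u.length = n - 2)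
    (hw : IsDyck w) (hwl : w.length = n - 2) (hwu : w ≠ u)
    (hB : B = false :: true :: w) :
    (∀ s : List Bool, s ≠ [] → s <+: v → s ≠ v → ¬(s <:+ B ∧ s ≠ B)) ∧
    (∀ s : List Bool, 1 < s.length → s <+: B → s ≠ B → ¬(s <:+ v ∧ s ≠ v)) := by
  have hn : n = u.length + 2 := by
    subst hv; simp at hvlen; omega
  constructor
  · intro s hne hpre hsv ⟨hsuf, hsB⟩
    obtain ⟨t, ht⟩ := hsuf
    have htne : t ≠ [] := by
      rintro rfl
      exact hsB (by simpa using ht)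
    match t, htne with
    | [a], _ =>
      rw [hB] at ht
      simp only [List.cons_append, List.nil_append, List.cons.injEq] at ht
      obtain ⟨rfl, hs⟩ := ht
      rw [hv] at hpre
      rw [hs] at hpre
      have hwp : w <+: u ++ [false] := by
        obtain ⟨r, hr⟩ := hpre
        simp only [List.cons_append, List.cons.injEq] at hr
        exact ⟨r, hr.2⟩
      have hwt : w = (u ++ [false]).take w.length := List.prefix_iff_eq_take.mp hwp
      rw [List.take_append_of_le_length (by omega)] at hwt
      have : u.take w.length = u := by
        rw [hwl, ← hul]; exact List.take_length (l := u)
      rw [this] at hwt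
      exact hwu hwt
    | a :: b :: t', _ =>
      rw [hB] at ht
      simp only [List.cons_append, List.cons.injEq] at ht
      obtain ⟨rfl, rfl, hw'⟩ := ht
      have ht'p : t' <+: w := ⟨s, hw'⟩
      have h1 : zeros t' ≤ ones t' := hw.2 t' ht'p
      have h2 : zeros s < ones s := hα.2 s hpre hne hsv
      have h3 : ones w = zeros w := hw.1
      have h4 : ones w = ones t' + ones s := by rw [← hw', ones_append]
      have h5 : zeros w = zeros t' + zeros s := by rw [← hw', zeros_append]
      omega
  · intro s hlen hpre hsB ⟨hsuf, hsv⟩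
    match s, hlen with
    | a :: b :: t, _ =>
      rw [hB] at hpre
      obtain ⟨r, hr⟩ := hpre
      simp only [List.cons_append, List.cons.injEq] at hr
      obtain ⟨rfl, rfl, hwr⟩ := hr
      have htp : t <+: w := ⟨r, hwr⟩
      have h1 : zeros t ≤ ones t := hw.2 t htp
      obtain ⟨p, hp⟩ := hsuf
      have hpne : p ≠ [] := by
        rintro rfl
        exact hsv (by simpa using hp)
      have hpnv : p ≠ v := by
        rintro rfl
        have := congrArg List.length hp
        simp at this
      have h2 : zeros p < ones p := hα.2 p ⟨_, hp⟩ hpne hpnv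
      have h3 : ones v = zeros v := hα.1.1
      have h4 : ones v = ones p + ones (false :: true :: t) := by
        rw [← hp, ones_append]
      have h5 : zeros v = zeros p + zeros (false :: true :: t) := by
        rw [← hp, zeros_append]
      simp only [ones, zeros, List.count_cons] at h1 h2 h3 h4 h5
      simp at h4 h5
      omega
end

section
/- Let v be a type α Dyck word and let B = 0w0 where w is a Dyck word of length |v| − 2. Then no nonempty proper prefix of v equals a nonempty proper suffix of B, and no proper prefix of B of length greater than 1 equals a proper suffix of v. -/
lemma ones_false : ones [false] = 0 := rfl

lemma zeros_false : zeros [false] = 1 := rfl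

/-- for v type α and B = 0w0 with w Dyck of length |v| − 2: no proper
prefix of v is a nonempty proper suffix of B, and no proper prefix of B of length > 1 is a
proper suffix of v. -/
theorem alpha_type5_overlap_restrictions (v w B : List Bool)
    (hα : IsAlphaDyck v)
    (hw : IsDyck w) (hwl : w.length = v.length - 2)
    (hB : B = false :: (w ++ [false])) :
    (∀ s : List Bool, s ≠ [] → s <+: v → s ≠ v → ¬(s <:+ B ∧ s ≠ B)) ∧
    (∀ s : List Bool, 1 < s.length → s <+: B → s ≠ B → ¬(s <:+ v ∧ s ≠ v)) := by
  subst hB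
  constructor
  · rintro s hne hpref hsv ⟨hsuf, hsB⟩
    -- s is a proper suffix of B, hence a suffix of w ++ [false]
    have hsuf' : s <:+ w ++ [false] := by
      rcases (List.suffix_cons_iff.mp hsuf) with h | h
      · exact absurd h hsB
      · exact h
    have hzo : zeros s < ones s := hα.2 s hpref hne hsv
    -- write s = t ++ [false]
    obtain ⟨r, hr⟩ := hsuf'
    -- r is a prefix of w ++ [false], and r ≠ w ++ [false]
    have hrpre : r <+: w ++ [false] := ⟨s, hr⟩
    have hrlen : r.length ≤ w.length := by
      have := congrArg List.length hr
      simp at this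
      have hs1 : 1 ≤ s.length := List.length_pos_iff.mpr hne
      omega
    have hrw : r <+: w :=
      List.prefix_of_prefix_length_le hrpre (List.prefix_append w [false]) hrlen
    have h1 : zeros r ≤ ones r := hw.2 r hrw
    have h2 : ones r + ones s = ones w := by
      have := congrArg ones hr
      rw [ones_append, ones_append] at this
      simp [ones] at this ⊢; omega
    have h3 : zeros r + zeros s = zeros w + 1 := by
      have := congrArg zeros hr
      rw [zeros_append, zeros_append] at this
      simp [zeros] at this ⊢; omega
    have h4 : ones w = zeros w := hw.1
    omega
  · rintro s hlen hpref hsB ⟨hsuf, hsv⟩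
    -- s = false :: p with p a prefix of w
    obtain ⟨a, p, rfl⟩ : ∃ a p, s = a :: p := by
      cases s with
      | nil => simp at hlen
      | cons a p => exact ⟨a, p, rfl⟩
    rw [List.cons_prefix_cons] at hpref
    obtain ⟨rfl, hp⟩ := hpref
    have hplen : p.length ≤ w.length := by
      have := hp.length_le
      simp at this
      simp at hlen
      by_contra h
      have : p.length = w.length + 1 := by omega
      have : p = w ++ [false] := List.IsPrefix.eq_of_length hp (by simp [this])
      exact hsB (by rw [this])
    have hpw : p <+: w :=
      List.prefix_of_prefix_length_le hp (List.prefix_append w [false]) hplen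
    have hpne : p ≠ [] := by
      simp at hlen
      intro h; simp [h] at hlen
    -- v = (u ++ [false]) ++ p
    obtain ⟨u, hu⟩ := hsuf
    have hv : v = (u ++ [false]) ++ p := by rw [← hu]; simp
    -- the prefix u ++ [false] of v is nonempty and proper
    have hprefix : u ++ [false] <+: v := ⟨p, hv.symm⟩
    have hne' : u ++ [false] ≠ [] := by simp
    have hnev : u ++ [false] ≠ v := by
      intro h
      rw [h] at hv
      exact hpne (List.self_eq_append_right.mp hv)
    have h1 : zeros (u ++ [false]) < ones (u ++ [false]) := hα.2 _ hprefix hne' hnev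
    rw [zeros_append, ones_append, ones_false, zeros_false] at h1
    have h2 : ones v = zeros v := hα.1.1
    have h3 : ones v = ones u + ones [false] + ones p := by rw [hv, ones_append, ones_append]
    have h4 : zeros v = zeros u + zeros [false] + zeros p := by
      rw [hv, zeros_append, zeros_append]
    rw [ones_false] at h3
    rw [zeros_false] at h4
    have h5 : zeros p ≤ ones p := hw.2 p hpw
    omega
end

section
/- Let n be odd, let u be a type α Dyck word of length n−1, and set A₁ = 1u (a string of length n). If B = w0 where w is a Dyck word of length n−1 with w ≠ u, then A₁ and B are non-overlapping strings. -/
/-- n odd, u type α of length n−1, A₁ = 1u; B = w0 with w Dyck of length n−1,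
w ≠ u: then A₁ and B are non-overlapping. -/
theorem odd_type7_nonoverlapping (n : ℕ) (hodd : Odd n) (u A₁ w B : List Bool)
    (hu : IsAlphaDyck u) (hul : u.length = n - 1) (hA : A₁ = true :: u)
    (hw : IsDyck w) (hwl : w.length = n - 1) (hwu : w ≠ u)
    (hB : B = w ++ [false]) : NonOverlapping A₁ B := by
  subst hA hB
  intro s hs
  constructor
  · rintro ⟨hpre, hsne, hsuf, hsnB⟩
    obtain ⟨b, γ, rfl⟩ : ∃ b γ, s = b :: γ := by
      cases s with
      | nil => exact absurd rfl hs
      | cons b γ => exact ⟨b, γ, rfl⟩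
    rw [List.cons_prefix_cons] at hpre
    obtain ⟨rfl, hγ⟩ := hpre
    have h1 : zeros γ ≤ ones γ := hu.1.2 γ hγ
    obtain ⟨p, hp⟩ := hsuf
    have hlen := congrArg List.length hp
    simp at hlen
    have hpw : p <+: w :=
      List.prefix_of_prefix_length_le ⟨true :: γ, hp⟩ (w.prefix_append [false]) (by omega)
    have h2 : zeros p ≤ ones p := hw.2 p hpw
    have h3 := hw.1
    have hc := congrArg (List.count true) hp
    have hc' := congrArg (List.count false) hp
    simp [List.count_append] at hc hc'
    simp only [ones, zeros] at h1 h2 h3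
    omega
  · rintro ⟨hpre, hsnB, hsuf, hsnA⟩
    -- s is a proper prefix of w ++ [false], hence a prefix of w
    have hlsB : s.length < w.length + 1 := by
      rcases lt_or_eq_of_le hpre.length_le with h | h
      · simpa using h
      · exact absurd (hpre.eq_of_length (by simpa using h)) hsnB
    have hsw : s <+: w :=
      List.prefix_of_prefix_length_le hpre (w.prefix_append [false]) (by omega)
    -- s is a proper suffix of true :: u, hence a suffix of u
    have hlsA : s.length < u.length + 1 := by
      rcases lt_or_eq_of_le hsuf.length_le with h | h
      · simpa using h
      · exact absurd (hsuf.eq_of_length (by simpa using h)) hsnA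
    obtain ⟨p, hp⟩ := hsuf
    have hsu : s <:+ u := by
      cases p with
      | nil =>
        have := congrArg List.length hp
        simp at this
        omega
      | cons b t =>
        simp at hp
        exact ⟨t, hp.2⟩
    obtain ⟨γ, hγ⟩ := hsu
    have hγpre : γ <+: u := ⟨s, hγ⟩
    by_cases hγnil : γ = []
    · subst hγnil
      simp at hγ
      subst hγ
      have hlen' : s.length = w.length := hul.trans hwl.symm
      exact hwu (hsw.eq_of_length hlen').symm
    · have hγne : γ ≠ u := by
        intro h
        subst h
        have h' : γ ++ s = γ ++ [] := by simpa using hγ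
        exact hs (List.append_cancel_left h')
      have h4 : zeros γ < ones γ := hu.2 γ hγpre hγnil hγne
      have h5 : zeros s ≤ ones s := hw.2 s hsw
      have h6 := hu.1.1
      have hc := congrArg (List.count true) hγ
      have hc' := congrArg (List.count false) hγ
      simp [List.count_append] at hc hc'
      simp only [ones, zeros] at h4 h5 h6
      omega
end

section
/- Let n be odd, let u be a type α Dyck word of length n−1, and set A₁ = 1u. If B = 1w where w is a Dyck word of length n−1 with w ≠ u, then A₁ and B are non-overlapping strings. -/
/-- Any nonempty prefix of `true :: v` has strictly more ones than zeros,
provided every prefix of `v` has at least as many ones as zeros. -/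
lemma pos_excess {v s : List Bool} (h2 : ∀ γ : List Bool, γ <+: v → zeros γ ≤ ones γ)
    (hs : s <+: true :: v) (hne : s ≠ []) : zeros s < ones s := by
  obtain ⟨t, ht⟩ := hs
  cases s with
  | nil => exact absurd rfl hne
  | cons b rest =>
    simp only [List.cons_append, List.cons.injEq] at ht
    obtain ⟨rfl, ht⟩ := ht
    have := h2 rest ⟨t, ht⟩
    simp [ones, zeros, List.count_cons] at *
    omega

/-- Any suffix of a Dyck word has at most as many ones as zeros. -/
lemma nonpos_excess {v s : List Bool} (hv : IsDyck v) (hs : s <:+ v) :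
    ones s ≤ zeros s := by
  obtain ⟨γ, rfl⟩ := hs
  have h1 := hv.1
  have h2 := hv.2 γ ⟨s, rfl⟩
  simp only [ones, zeros, List.count_append] at *
  omega

lemma suffix_of_cons {a : Bool} {v s : List Bool} (hs : s <:+ a :: v) (hne : s ≠ a :: v) :
    s <:+ v := by
  rcases List.suffix_cons_iff.mp hs with h | h
  · exact absurd h hne
  · exact h

/-- n odd, u type α of length n−1, A₁ = 1u; B = 1w with w Dyck of length n−1,
w ≠ u: then A₁ and B are non-overlapping. -/
theorem odd_type6_nonoverlapping (n : ℕ) (hodd : Odd n) (u A₁ w B : List Bool)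
    (hu : IsAlphaDyck u) (hul : u.length = n - 1) (hA : A₁ = true :: u)
    (hw : IsDyck w) (hwl : w.length = n - 1) (hwu : w ≠ u)
    (hB : B = true :: w) : NonOverlapping A₁ B := by
  subst hA hB
  intro s hs
  constructor
  · rintro ⟨hp, _, hsf, hne⟩
    have h1 : zeros s < ones s := pos_excess hu.1.2 hp hs
    have h2 : ones s ≤ zeros s := nonpos_excess hw (suffix_of_cons hsf hne)
    omega
  · rintro ⟨hp, _, hsf, hne⟩
    have h1 : zeros s < ones s := pos_excess hw.2 hp hs
    have h2 : ones s ≤ zeros s := nonpos_excess hu.1 (suffix_of_cons hsf hne)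
    omega
end

section
/- If γ is a nonempty proper prefix of a type α Dyck word v, then the string γ is not a Dyck word, and moreover γ cannot equal the suffix of length |γ| of any string of the form w00 with w a Dyck word. -/
/-- a nonempty proper prefix γ of a type α Dyck word is not a Dyck word, and is
not a suffix of any w00 with w Dyck (in particular it is not the suffix of length |γ| of w00). -/
theorem alpha_prefix_not_dyck_nor_type3_suffix (v γ : List Bool)
    (hv : IsAlphaDyck v) (hγ : γ <+: v) (hγne : γ ≠ []) (hγpr : γ ≠ v) :
    ¬ IsDyck γ ∧ ∀ w : List Bool, IsDyck w → ¬ γ <:+ (w ++ [false, false]) := by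
  have hlt : zeros γ < ones γ := hv.2 γ hγ hγne hγpr
  constructor
  · intro hd
    simp [IsDyck] at hd
    omega
  · intro w hw hsuf
    by_cases hlen : γ.length ≤ 2
    · have h2 : γ <:+ [false, false] := by
        refine List.suffix_of_suffix_length_le hsuf (List.suffix_append w _) (by simpa)
      have hones : ones γ = 0 := by
        have := h2.sublist.count_le true
        simpa [ones] using Nat.le_zero.mp (by simpa using this)
      omega
    · obtain ⟨p, hp⟩ := hsuf
      have hppre : p <+: w := by
        refine List.prefix_of_prefix_length_le ⟨γ, hp⟩ (List.prefix_append w _) ?_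
        have := congrArg List.length hp
        simp at this
        omega
      have hpz : zeros p ≤ ones p := hw.2 p hppre
      have h1 := congrArg (List.count true) hp
      have h2 := congrArg (List.count false) hp
      simp [List.count_append] at h1 h2
      have := hw.1
      simp only [IsDyck, ones, zeros] at *
      omega
end

section
/- The number of type α Dyck words of length 2ℓ (ℓ ≥ 1) equals the Catalan number C_{ℓ−1}. -/
open DyckStep

def b2s : Bool → DyckStep := fun b => if b then U else D
def s2b : DyckStep → Bool := fun s => match s with | U => true | D => false

lemma b2s_inj : Function.Injective b2s := by decide
lemma s2b_inj : Function.Injective s2b := by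
  intro a b h; cases a <;> cases b <;> simp_all [s2b]

lemma count_b2s (l : List Bool) :
    (l.map b2s).count U = ones l ∧ (l.map b2s).count D = zeros l := by
  constructor
  · simpa [ones, b2s] using List.count_map_of_injective l b2s b2s_inj true
  · simpa [zeros, b2s] using List.count_map_of_injective l b2s b2s_inj false

lemma count_s2b (l : List DyckStep) :
    ones (l.map s2b) = l.count U ∧ zeros (l.map s2b) = l.count D := by
  constructor
  · simpa [ones, s2b] using List.count_map_of_injective l s2b s2b_inj U
  · simpa [zeros, s2b] using List.count_map_of_injective l s2b s2b_inj D

noncomputable def dyckEquiv (n : ℕ) :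
    {w : List Bool // IsDyck w ∧ w.length = 2 * n} ≃ {p : DyckWord // p.semilength = n} where
  toFun w := ⟨⟨w.1.map b2s, by
      rw [(count_b2s w.1).1, (count_b2s w.1).2, w.2.1.1], by
      intro i
      rw [← List.map_take, (count_b2s _).1, (count_b2s _).2]
      exact w.2.1.2 _ (List.take_prefix _ _)⟩, by
    have hl : ones w.1 = n := by
      have h1 := w.2.1.1
      have hlen := w.2.2
      have : ones w.1 + zeros w.1 = w.1.length := by
        simpa [ones, zeros] using (List.count_true_add_count_false w.1)
      omega
    simpa [DyckWord.semilength, (count_b2s w.1).1] using hl⟩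
  invFun p := ⟨p.1.toList.map s2b, by
      refine ⟨⟨?_, ?_⟩, ?_⟩
      · rw [(count_s2b _).1, (count_s2b _).2]; exact p.1.count_U_eq_count_D
      · intro γ hγ
        rw [List.prefix_iff_eq_take] at hγ
        rw [hγ, ← List.map_take, (count_s2b _).1, (count_s2b _).2]
        exact p.1.count_D_le_count_U γ.length
      · rw [List.length_map, ← p.1.two_mul_semilength_eq_length, p.2]⟩
  left_inv w := by
    ext1
    simp only [List.map_map]
    have : (s2b ∘ b2s) = id := by funext b; cases b <;> rfl
    rw [this, List.map_id]
  right_inv p := by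
    ext1; ext1
    simp only [List.map_map]
    have : (b2s ∘ s2b) = id := by funext s; cases s <;> rfl
    rw [this, List.map_id]

theorem dyck_card (n : ℕ) :
    {w : List Bool | IsDyck w ∧ w.length = 2 * n}.ncard = catalan n := by
  calc {w : List Bool | IsDyck w ∧ w.length = 2 * n}.ncard
      = Nat.card {w : List Bool | IsDyck w ∧ w.length = 2 * n} :=
        (Nat.card_coe_set_eq _).symm
    _ = Nat.card {p : DyckWord // p.semilength = n} := Nat.card_congr (dyckEquiv n)
    _ = Fintype.card {p : DyckWord // p.semilength = n} := Nat.card_eq_fintype_card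
    _ = catalan n := DyckWord.card_dyckWord_semilength_eq_catalan n

lemma alpha_iff (n : ℕ) (v : List Bool) :
    (IsAlphaDyck v ∧ v.length = 2 * (n + 1)) ↔
    ∃ w, (IsDyck w ∧ w.length = 2 * n) ∧ v = true :: w ++ [false] := by
  constructor
  · rintro ⟨⟨⟨hbal, hweak⟩, hstrict⟩, hlen⟩
    have hvne : v ≠ [] := by rintro rfl; simp at hlen
    obtain ⟨a, u, rfl⟩ := List.exists_cons_of_ne_nil hvne
    have hune : u ≠ [] := by rintro rfl; simp at hlen; omega
    have hul : u.length = 2 * n + 1 := by simp at hlen; omega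
    -- first letter is true
    have ha : a = true := by
      have h1 := hstrict [a] (by simp) (by simp)
        (by intro h; apply hune; simpa using congrArg List.length h)
      cases a
      · simp [zeros, ones] at h1
      · rfl
    subst ha
    -- last letter is false
    set w := u.dropLast with hw
    have hlast : u.getLast hune = false := by
      by_contra hla
      have hla : u.getLast hune = true := by simpa using hla
      have hu : w ++ [true] = u := by rw [hw, ← hla]; exact List.dropLast_append_getLast hune
      have hpre : (true :: w) <+: (true :: u) := by
        rw [List.cons_prefix_cons]
        exact ⟨rfl, by rw [← hu]; exact List.prefix_append _ _⟩
      have h2 := hstrict (true :: w) hpre (by simp)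
        (by
          intro h
          have := congrArg List.length h
          simp [← hu] at this)
      rw [← hu] at hbal
      simp [zeros, ones, List.count_cons, List.count_append] at hbal h2
      omega
    have hu : w ++ [false] = u := by rw [hw, ← hlast]; exact List.dropLast_append_getLast hune
    refine ⟨w, ⟨⟨?_, ?_⟩, ?_⟩, by rw [List.cons_append, hu]⟩
    · rw [← hu] at hbal
      simp [zeros, ones, List.count_cons, List.count_append] at hbal ⊢
      omega
    · intro γ hγ
      have hpre : (true :: γ) <+: (true :: u) := by
        rw [List.cons_prefix_cons]
        exact ⟨rfl, hγ.trans (by rw [← hu]; exact List.prefix_append _ _)⟩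
      have hne : (true :: γ) ≠ (true :: u) := by
        intro h
        have h1 := congrArg List.length h
        have h2 := hγ.length_le
        have h3 : w.length + 1 = u.length := by rw [← hu]; simp
        simp at h1
        omega
      have h2 := hstrict (true :: γ) hpre (by simp) hne
      simp [zeros, ones, List.count_cons] at h2 ⊢
      omega
    · have : w.length + 1 = u.length := by rw [← hu]; simp
      omega
  · rintro ⟨w, ⟨⟨hbal, hweak⟩, hwl⟩, rfl⟩
    have hones : ones (true :: w ++ [false]) = ones w + 1 := by
      simp [ones, List.count_cons, List.count_append]
    have hzeros : zeros (true :: w ++ [false]) = zeros w + 1 := by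
      simp [zeros, List.count_cons, List.count_append]
    have hstrict : ∀ γ : List Bool, γ <+: (true :: w ++ [false]) → γ ≠ [] →
        γ ≠ (true :: w ++ [false]) → zeros γ < ones γ := by
      rw [List.cons_append] at *
      intro γ hγ hne hnev
      obtain ⟨b, δ, rfl⟩ := List.exists_cons_of_ne_nil hne
      rw [List.cons_prefix_cons] at hγ
      obtain ⟨rfl, hδ⟩ := hγ
      rw [List.prefix_concat_iff] at hδ
      rcases hδ with rfl | hδ
      · exact absurd rfl hnev
      · have := hweak δ hδ
        simp only [zeros, ones, List.count_cons] at this ⊢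
        simp
        omega
    refine ⟨⟨⟨by omega, ?_⟩, hstrict⟩, by simp; omega⟩
    intro γ hγ
    rcases eq_or_ne γ [] with rfl | hne
    · simp [zeros, ones]
    rcases eq_or_ne γ (true :: w ++ [false]) with rfl | hnev
    · omega
    · exact (hstrict γ hγ hne hnev).le

/-- the number of type α Dyck words of length 2ℓ (ℓ ≥ 1) is the Catalan number
C_{ℓ−1}. -/
theorem card_alpha_dyck (ℓ : ℕ) (hℓ : 1 ≤ ℓ) :
    {v : List Bool | IsAlphaDyck v ∧ v.length = 2 * ℓ}.ncard = catalan (ℓ - 1) := by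
  obtain ⟨n, rfl⟩ : ∃ n, ℓ = n + 1 := ⟨ℓ - 1, by omega⟩
  have hinj : Function.Injective (fun w : List Bool => true :: w ++ [false]) := by
    intro a b h
    simpa using h
  have hset : {v : List Bool | IsAlphaDyck v ∧ v.length = 2 * (n + 1)} =
      (fun w : List Bool => true :: w ++ [false]) '' {w | IsDyck w ∧ w.length = 2 * n} := by
    ext v
    simp only [Set.mem_setOf_eq, Set.mem_image, alpha_iff]
    constructor
    · rintro ⟨w, hw, rfl⟩; exact ⟨w, hw, rfl⟩
    · rintro ⟨w, hw, rfl⟩; exact ⟨w, hw, rfl⟩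
  rw [hset, Set.ncard_image_of_injective _ hinj, dyck_card]
  simp
end
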